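/- Strong completeness for CK: for every set Γ of L-formulas and every formula φ, if Γ semantically entails φ on the class of all CK-frames, then Γ ⊢_CK φ. -/

import Mathlib

/-- Formulas of the modal language L. -/
inductive Form : Type
  | var : ℕ → Form
  | bot : Form
  | and : Form → Form → Form
  | or : Form → Form → Form
  | imp : Form → Form → Form
  | box : Form → Form
  | dia : Form → Form

namespace Form

/-- Negation abbreviation: ¬φ := φ → ⊥. -/
def neg (φ : Form) : Form := φ.imp bot

/-- Uniform substitution. -/
def subst (σ : ℕ → Form) : Form → Form
  | var p => σ p
  | bot => bot
  | and a b => and (a.subst σ) (b.subst σ)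
  | or a b => or (a.subst σ) (b.subst σ)
  | imp a b => imp (a.subst σ) (b.subst σ)
  | box a => box (a.subst σ)
  | dia a => dia (a.subst σ)

end Form

/-- Substitution instances of the axioms of a standard Hilbert axiomatisation
of intuitionistic propositional logic (the axioms are schematic, so all
substitution instances are included). -/
inductive IPLAx : Form → Prop
  | a1 (φ ψ : Form) : IPLAx (φ.imp (ψ.imp φ))
  | a2 (φ ψ χ : Form) : IPLAx ((φ.imp (ψ.imp χ)).imp ((φ.imp ψ).imp (φ.imp χ)))
  | a3 (φ ψ : Form) : IPLAx ((φ.and ψ).imp φ)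
  | a4 (φ ψ : Form) : IPLAx ((φ.and ψ).imp ψ)
  | a5 (φ ψ : Form) : IPLAx (φ.imp (ψ.imp (φ.and ψ)))
  | a6 (φ ψ : Form) : IPLAx (φ.imp (φ.or ψ))
  | a7 (φ ψ : Form) : IPLAx (ψ.imp (φ.or ψ))
  | a8 (φ ψ χ : Form) : IPLAx ((φ.imp χ).imp ((ψ.imp χ).imp ((φ.or ψ).imp χ)))
  | a9 (φ : Form) : IPLAx (Form.bot.imp φ)

/-- Substitution instances of K_□ : □(φ→ψ) → (□φ → □ψ). -/
def KBoxAx (χ : Form) : Prop :=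
  ∃ φ ψ : Form, χ = ((φ.imp ψ).box).imp ((φ.box).imp (ψ.box))

/-- Substitution instances of K_◇ : □(φ→ψ) → (◇φ → ◇ψ). -/
def KDiaAx (χ : Form) : Prop :=
  ∃ φ ψ : Form, χ = ((φ.imp ψ).box).imp ((φ.dia).imp (ψ.dia))

/-- Axiom instances available in the calculus CK ⊕ Ax : instances of IPL
axioms, of K_□, of K_◇, or substitution instances of members of Ax. -/
def AxInst (Ax : Set Form) (φ : Form) : Prop :=
  IPLAx φ ∨ KBoxAx φ ∨ KDiaAx φ ∨ ∃ ψ ∈ Ax, ∃ σ : ℕ → Form, φ = ψ.subst σ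

/-- The generalised Hilbert calculus CK ⊕ Ax deriving consecutions Γ ⊢_Ax φ:
rules (Ax), (MP), (Nec) and (El). -/
inductive Prv (Ax : Set Form) : Set Form → Form → Prop
  | ax {Γ : Set Form} {φ : Form} : AxInst Ax φ → Prv Ax Γ φ
  | mp {Γ : Set Form} {φ ψ : Form} : Prv Ax Γ φ → Prv Ax Γ (φ.imp ψ) → Prv Ax Γ ψ
  | nec {Γ : Set Form} {φ : Form} : Prv Ax ∅ φ → Prv Ax Γ φ.box
  | el {Γ : Set Form} {φ : Form} : φ ∈ Γ → Prv Ax Γ φ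

/-- A CK-frame (X, e, ≤, R): ≤ is a preorder, e is ≤-maximal (an "exploding"
world), and e R x iff x = e. -/
structure CKFrame where
  W : Type
  le : W → W → Prop
  R : W → W → Prop
  e : W
  le_refl : ∀ x : W, le x x
  le_trans : ∀ {x y z : W}, le x y → le y z → le x z
  e_max : ∀ {x : W}, le e x → x = e
  e_R : ∀ x : W, R e x ↔ x = e

/-- A valuation on a CK-frame: each variable gets a ≤-upset containing e. -/
structure Val (F : CKFrame) where
  V : ℕ → F.W → Prop
  mono : ∀ (p : ℕ) {x y : F.W}, F.le x y → V p x → V p y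
  at_e : ∀ p : ℕ, V p F.e

/-- The forcing relation M, x ⊩ φ of a CK-model (F, V). -/
def Forces (F : CKFrame) (V : Val F) : Form → F.W → Prop
  | .var p, x => V.V p x
  | .bot, x => x = F.e
  | .and a b, x => Forces F V a x ∧ Forces F V b x
  | .or a b, x => Forces F V a x ∨ Forces F V b x
  | .imp a b, x => ∀ y : F.W, F.le x y → Forces F V a y → Forces F V b y
  | .box a, x => ∀ y z : F.W, F.le x y → F.R y z → Forces F V a z
  | .dia a, x => ∀ y : F.W, F.le x y → ∃ z : F.W, F.R y z ∧ Forces F V a z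

/-- A frame validates the consecution Γ ⊢ φ if in every model on it, every
world forcing all of Γ forces φ. -/
def ValidConseq (F : CKFrame) (Γ : Set Form) (φ : Form) : Prop :=
  ∀ (V : Val F) (x : F.W), (∀ ψ ∈ Γ, Forces F V ψ x) → Forces F V φ x

/-- A frame validates a formula φ if every world in every model on it forces φ. -/
def ValidForm (F : CKFrame) (φ : Form) : Prop :=
  ∀ (V : Val F) (x : F.W), Forces F V φ x

/-- Γ semantically entails φ on a class 𝓕 of CK-frames. -/
def SemEntails (𝓕 : Set CKFrame) (Γ : Set Form) (φ : Form) : Prop :=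
  ∀ F ∈ 𝓕, ValidConseq F Γ φ


/-! ### Auxiliary machinery for the canonical model construction -/

namespace CKAux

open Form

/-- Shorthand for axiom instances in the pure calculus. -/
theorem pax {Γ : Set Form} {φ : Form} (h : IPLAx φ) : Prv ∅ Γ φ :=
  Prv.ax (Or.inl h)

theorem kbox {Γ : Set Form} (φ ψ : Form) :
    Prv ∅ Γ (((φ.imp ψ).box).imp ((φ.box).imp (ψ.box))) :=
  Prv.ax (Or.inr (Or.inl ⟨φ, ψ, rfl⟩))

theorem kdia {Γ : Set Form} (φ ψ : Form) :
    Prv ∅ Γ (((φ.imp ψ).box).imp ((φ.dia).imp (ψ.dia))) :=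
  Prv.ax (Or.inr (Or.inr (Or.inl ⟨φ, ψ, rfl⟩)))

theorem prv_mono : ∀ {Γ Γ' : Set Form} {φ : Form}, Prv ∅ Γ φ → Γ ⊆ Γ' → Prv ∅ Γ' φ := by
  intro Γ Γ' φ h
  induction h generalizing Γ' with
  | ax h => exact fun _ => Prv.ax h
  | mp _ _ ih1 ih2 => exact fun hs => Prv.mp (ih1 hs) (ih2 hs)
  | nec h => exact fun _ => Prv.nec h
  | el h => exact fun hs => Prv.el (hs h)

theorem lift {Γ : Set Form} {b : Form} (a : Form) (h : Prv ∅ Γ b) :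
    Prv ∅ Γ (a.imp b) :=
  Prv.mp h (pax (IPLAx.a1 b a))

theorem imp_self {Γ : Set Form} (a : Form) : Prv ∅ Γ (a.imp a) :=
  Prv.mp (pax (IPLAx.a1 a a))
    (Prv.mp (pax (IPLAx.a1 a (a.imp a))) (pax (IPLAx.a2 a (a.imp a) a)))

theorem deduction : ∀ {Δ Γ : Set Form} {a b : Form},
    Prv ∅ Δ b → Δ = insert a Γ → Prv ∅ Γ (a.imp b) := by
  intro Δ Γ a b h
  induction h generalizing Γ with
  | ax h => exact fun _ => lift a (Prv.ax h)
  | mp _ _ ih1 ih2 =>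
    exact fun he => Prv.mp (ih1 he) (Prv.mp (ih2 he) (pax (IPLAx.a2 _ _ _)))
  | nec h => exact fun _ => lift a (Prv.nec h)
  | el hmem =>
    intro he
    subst he
    rcases hmem with h | h
    · rw [h]; exact imp_self a
    · exact lift a (Prv.el h)

theorem cut {Γ : Set Form} {a b : Form} (h1 : Prv ∅ Γ a)
    (h2 : Prv ∅ (insert a Γ) b) : Prv ∅ Γ b :=
  Prv.mp h1 (deduction h2 rfl)

theorem boxPrv : ∀ {Δ : Set Form} {a : Form},
    Prv ∅ Δ a → Prv ∅ (Form.box '' Δ) a.box := by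
  intro Δ a h
  induction h with
  | ax h => exact Prv.nec (Prv.ax h)
  | mp _ _ ih1 ih2 => exact Prv.mp ih1 (Prv.mp ih2 (kbox _ _))
  | nec h => exact Prv.nec (Prv.nec h)
  | el h => exact Prv.el ⟨_, h, rfl⟩

/-- Compactness: every derivable consecution has a finite core. -/
theorem prv_finite : ∀ {Δ : Set Form} {a : Form},
    Prv ∅ Δ a → ∃ Δ₀ : Set Form, Δ₀ ⊆ Δ ∧ Δ₀.Finite ∧ Prv ∅ Δ₀ a := by
  intro Δ a h
  induction h with
  | ax h => exact ⟨∅, by simp, Set.finite_empty, Prv.ax h⟩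
  | mp _ _ ih1 ih2 =>
    obtain ⟨A, hA, hAf, hpA⟩ := ih1
    obtain ⟨B, hB, hBf, hpB⟩ := ih2
    exact ⟨A ∪ B, Set.union_subset hA hB, hAf.union hBf,
      Prv.mp (prv_mono hpA Set.subset_union_left)
        (prv_mono hpB Set.subset_union_right)⟩
  | nec h => exact ⟨∅, by simp, Set.finite_empty, Prv.nec h⟩
  | el h => exact ⟨_, Set.singleton_subset_iff.2 h, Set.finite_singleton _,
      Prv.el rfl⟩

/-- A theory: a set closed under derivability. -/
def Thy (Δ : Set Form) : Prop := ∀ ψ : Form, Prv ∅ Δ ψ → ψ ∈ Δ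

/-- A prime theory. -/
def IsPrime (Δ : Set Form) : Prop :=
  Thy Δ ∧ ∀ a b : Form, a.or b ∈ Δ → a ∈ Δ ∨ b ∈ Δ

theorem univ_prime : IsPrime (Set.univ : Set Form) :=
  ⟨fun _ _ => trivial, fun _ _ _ => Or.inl trivial⟩

/-- A finite subset of the union of a nonempty chain lies in some member. -/
theorem finite_subset_chain {c : Set (Set Form)} (hc : IsChain (· ⊆ ·) c)
    (hne : c.Nonempty) : ∀ {s : Set Form}, s.Finite → s ⊆ ⋃₀ c →
      ∃ t ∈ c, s ⊆ t := by
  intro s hs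
  refine Set.Finite.induction_on (motive := fun s _ => s ⊆ ⋃₀ c → ∃ t ∈ c, s ⊆ t) s hs ?_ ?_
  · intro _
    obtain ⟨t, ht⟩ := hne
    exact ⟨t, ht, by simp⟩
  · intro x s hx hsf ih hsub
    obtain ⟨t1, ht1c, hxt1⟩ := hsub (Set.mem_insert x s)
    obtain ⟨t2, ht2c, hst2⟩ := ih (fun y hy => hsub (Set.mem_insert_of_mem _ hy))
    rcases hc.total ht1c ht2c with h12 | h21
    · exact ⟨t2, ht2c, Set.insert_subset (h12 hxt1) hst2⟩
    · exact ⟨t1, ht1c, Set.insert_subset hxt1 (fun y hy => h21 (hst2 hy))⟩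

/-- Lindenbaum lemma: extend a non-deriving set to a prime theory avoiding the
conclusion. -/
theorem lindenbaum {Δ : Set Form} {a : Form} (h : ¬ Prv ∅ Δ a) :
    ∃ Θ : Set Form, Δ ⊆ Θ ∧ IsPrime Θ ∧ a ∉ Θ := by
  obtain ⟨Θ, hΔΘ, hmax⟩ := zorn_subset_nonempty {Δ' : Set Form | ¬ Prv ∅ Δ' a}
    (fun c hcS hc hne => by
      refine ⟨⋃₀ c, ?_, fun s hs => Set.subset_sUnion_of_mem hs⟩
      intro hpu
      obtain ⟨Δ₀, hsub, hfin, hp⟩ := prv_finite hpu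
      obtain ⟨t, htc, hΔ₀t⟩ := finite_subset_chain hc hne hfin hsub
      exact hcS htc (prv_mono hp hΔ₀t)) Δ h
  have hΘ : ¬ Prv ∅ Θ a := hmax.prop
  have hclosed : ∀ ψ : Form, ψ ∉ Θ → Prv ∅ (insert ψ Θ) a := by
    intro ψ hψ
    by_contra hnp
    have hins : insert ψ Θ ∈ {Δ' : Set Form | ¬ Prv ∅ Δ' a} := hnp
    exact hψ (hmax.2 hins (Set.subset_insert ψ Θ) (Set.mem_insert ψ Θ))
  have hthy : Thy Θ := by
    intro ψ hp
    by_contra hψ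
    exact hΘ (cut hp (hclosed ψ hψ))
  refine ⟨Θ, hΔΘ, ⟨hthy, ?_⟩, fun ha => hΘ (Prv.el ha)⟩
  intro b c hbc
  by_contra hn
  push_neg at hn
  have hb := deduction (hclosed b hn.1) rfl
  have hcc := deduction (hclosed c hn.2) rfl
  exact hΘ (Prv.mp (Prv.el hbc) (Prv.mp hcc (Prv.mp hb (pax (IPLAx.a8 b c a)))))

/-- The box-inverse of a set. -/
def boxInv (Θ : Set Form) : Set Form := {b : Form | Form.box b ∈ Θ}

theorem box_mem_of_prv {Θ : Set Form} (hT : Thy Θ) {a : Form}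
    (h : Prv ∅ (boxInv Θ) a) : Form.box a ∈ Θ := by
  refine hT _ (prv_mono (boxPrv h) ?_)
  rintro ψ ⟨b, hb, rfl⟩
  exact hb

theorem dia_mem_of_prv {Θ : Set Form} (hT : Thy Θ) {a b : Form}
    (h : Prv ∅ (insert b (boxInv Θ)) a) (hd : Form.dia b ∈ Θ) :
    Form.dia a ∈ Θ := by
  have h1 : Prv ∅ (boxInv Θ) (b.imp a) := deduction h rfl
  have h2 : Form.box (b.imp a) ∈ Θ := box_mem_of_prv hT h1
  exact hT _ (Prv.mp (Prv.el hd) (Prv.mp (Prv.el h2) (kdia b a)))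

theorem bot_total {Θ : Set Form} (hT : Thy Θ) (hb : Form.bot ∈ Θ) :
    Θ = Set.univ := by
  ext ψ
  simp only [Set.mem_univ, iff_true]
  exact hT ψ (Prv.mp (Prv.el hb) (pax (IPLAx.a9 ψ)))

/-- Goodness predicate for canonical worlds ("segments"). -/
def Good (Θ : Set Form) (D : Set (Set Form)) : Prop :=
  IsPrime Θ ∧ (∀ Λ ∈ D, IsPrime Λ) ∧
  (∀ Λ ∈ D, ∀ a : Form, Form.box a ∈ Θ → a ∈ Λ) ∧
  (∀ a : Form, Form.dia a ∈ Θ → ∃ Λ ∈ D, a ∈ Λ) ∧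
  (Form.bot ∈ Θ → D = {Set.univ})

theorem good_univ : Good Set.univ {Set.univ} :=
  ⟨univ_prime, fun Λ hΛ => by rw [Set.mem_singleton_iff] at hΛ; rw [hΛ]; exact univ_prime,
    fun Λ hΛ a _ => by rw [Set.mem_singleton_iff] at hΛ; rw [hΛ]; trivial,
    fun a _ => ⟨Set.univ, rfl, trivial⟩, fun _ => rfl⟩

theorem good_single {Θ : Set Form} (hΘ : IsPrime Θ) : Good Θ {Set.univ} :=
  ⟨hΘ, fun Λ hΛ => by rw [Set.mem_singleton_iff] at hΛ; rw [hΛ]; exact univ_prime,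
    fun Λ hΛ a _ => by rw [Set.mem_singleton_iff] at hΛ; rw [hΛ]; trivial,
    fun a _ => ⟨Set.univ, rfl, trivial⟩, fun _ => rfl⟩

/-- The canonical frame. -/
def canF : CKFrame where
  W := {p : Set Form × Set (Set Form) // Good p.1 p.2}
  le x y := x.1.1 ⊆ y.1.1
  R x y := y.1.1 ∈ x.1.2
  e := ⟨(Set.univ, {Set.univ}), good_univ⟩
  le_refl x := subset_rfl
  le_trans h1 h2 := h1.trans h2
  e_max := by
    rintro ⟨⟨Θ, D⟩, hg⟩ hle
    have hΘ : Θ = Set.univ := Set.univ_subset_iff.mp hle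
    subst hΘ
    have hD : D = {Set.univ} := hg.2.2.2.2 trivial
    subst hD
    rfl
  e_R := by
    rintro ⟨⟨Θ, D⟩, hg⟩
    constructor
    · intro hmem
      have hΘ : Θ = Set.univ := by simpa using hmem
      subst hΘ
      have hD : D = {Set.univ} := hg.2.2.2.2 trivial
      subst hD
      rfl
    · intro hx
      rw [hx]
      exact rfl

/-- The canonical valuation. -/
def canV : Val canF where
  V p x := Form.var p ∈ x.1.1
  mono p _ _ hle hmem := hle hmem
  at_e p := trivial

theorem mem_of_prv_seg {Θ : Set Form} (hp : IsPrime Θ) {ψ : Form}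
    (h : Prv ∅ Θ ψ) : ψ ∈ Θ := hp.1 ψ h

/-- The truth lemma for the canonical model. -/
theorem truth : ∀ (ψ : Form) (x : canF.W), Forces canF canV ψ x ↔ ψ ∈ x.1.1 := by
  intro ψ
  induction ψ with
  | var p => intro x; exact Iff.rfl
  | bot =>
    rintro ⟨⟨Θ, D⟩, hg⟩
    simp only [Forces]
    constructor
    · intro hx
      have : Θ = Set.univ := congrArg (fun z => z.1.1) hx
      rw [this]; trivial
    · intro hb
      have hΘ : Θ = Set.univ := bot_total hg.1.1 hb
      subst hΘ
      have hD : D = {Set.univ} := hg.2.2.2.2 hb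
      subst hD
      rfl
  | and a b iha ihb =>
    rintro x
    obtain ⟨⟨Θ, D⟩, hg⟩ := x
    simp only [Forces, iha, ihb]
    constructor
    · rintro ⟨ha, hb⟩
      exact mem_of_prv_seg hg.1 (Prv.mp (Prv.el ((ihb _).1 hb))
        (Prv.mp (Prv.el ((iha _).1 ha)) (pax (IPLAx.a5 a b))))
    · intro hab
      exact ⟨(iha _).2 (mem_of_prv_seg hg.1 (Prv.mp (Prv.el hab) (pax (IPLAx.a3 a b)))),
        (ihb _).2 (mem_of_prv_seg hg.1 (Prv.mp (Prv.el hab) (pax (IPLAx.a4 a b))))⟩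
  | or a b iha ihb =>
    rintro x
    obtain ⟨⟨Θ, D⟩, hg⟩ := x
    simp only [Forces, iha, ihb]
    constructor
    · rintro (ha | hb)
      · exact mem_of_prv_seg hg.1 (Prv.mp (Prv.el ((iha _).1 ha)) (pax (IPLAx.a6 a b)))
      · exact mem_of_prv_seg hg.1 (Prv.mp (Prv.el ((ihb _).1 hb)) (pax (IPLAx.a7 a b)))
    · intro hab
      exact (hg.1.2 a b hab).imp (iha _).2 (ihb _).2
  | imp a b iha ihb =>
    rintro x
    obtain ⟨⟨Θ, D⟩, hg⟩ := x
    constructor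
    · intro hf
      by_contra hmem
      have hnp : ¬ Prv ∅ (insert a Θ) b := by
        intro hp
        exact hmem (mem_of_prv_seg hg.1 (deduction hp rfl))
      obtain ⟨Θ', hsub, hp', hb'⟩ := lindenbaum hnp
      have hy : Good Θ' {Set.univ} := good_single hp'
      have hfb := hf ⟨(Θ', {Set.univ}), hy⟩
        (fun ψ hψ => hsub (Set.mem_insert_of_mem _ hψ))
        ((iha _).2 (hsub (Set.mem_insert a Θ)))
      exact hb' ((ihb _).1 hfb)
    · intro hmem y hle hfa
      have ha : a ∈ y.1.1 := (iha y).1 hfa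
      exact (ihb y).2 (mem_of_prv_seg y.2.1
        (Prv.mp (Prv.el ha) (Prv.el (hle hmem))))
  | box a iha =>
    rintro x
    obtain ⟨⟨Θ, D⟩, hg⟩ := x
    constructor
    · intro hf
      by_contra hmem
      have hnp : ¬ Prv ∅ (boxInv Θ) a := fun hp => hmem (box_mem_of_prv hg.1.1 hp)
      obtain ⟨Λ, hsub, hpΛ, haΛ⟩ := lindenbaum hnp
      have hΘbot : Form.bot ∉ Θ := by
        intro hb
        exact hmem (by rw [bot_total hg.1.1 hb]; trivial)
      have hygood : Good Θ {Λ, Set.univ} := by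
        refine ⟨hg.1, ?_, ?_, ?_, ?_⟩
        · rintro Ξ (h | h)
          · rw [h]; exact hpΛ
          · rw [Set.mem_singleton_iff] at h; rw [h]; exact univ_prime
        · rintro Ξ (h | h) c hc
          · rw [h]; exact hsub hc
          · rw [Set.mem_singleton_iff] at h; rw [h]; trivial
        · intro c _; exact ⟨Set.univ, Or.inr rfl, trivial⟩
        · intro hb; exact absurd hb hΘbot
      have hzgood : Good Λ {Set.univ} := good_single hpΛ
      have := hf ⟨(Θ, {Λ, Set.univ}), hygood⟩ ⟨(Λ, {Set.univ}), hzgood⟩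
        subset_rfl (Or.inl rfl)
      exact haΛ ((iha _).1 this)
    · intro hmem y z hle hR
      exact (iha z).2 (y.2.2.2.1 z.1.1 hR a (hle hmem))
  | dia a iha =>
    rintro x
    obtain ⟨⟨Θ, D⟩, hg⟩ := x
    constructor
    · intro hf
      by_contra hmem
      have hnp : ¬ Prv ∅ Θ (Form.dia a) := fun hp => hmem (mem_of_prv_seg hg.1 hp)
      obtain ⟨Θ', hsub, hp', hd'⟩ := lindenbaum hnp
      -- the blocking successor set
      set D' : Set (Set Form) := {Λ | IsPrime Λ ∧ boxInv Θ' ⊆ Λ ∧ a ∉ Λ} with hD'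
      have hygood : Good Θ' D' := by
        refine ⟨hp', fun Λ hΛ => hΛ.1, fun Λ hΛ c hc => hΛ.2.1 hc, ?_, ?_⟩
        · intro b hb
          have hnpb : ¬ Prv ∅ (insert b (boxInv Θ')) a := by
            intro hp
            exact hd' (dia_mem_of_prv hp'.1 hp hb)
          obtain ⟨Λ, hsubΛ, hpΛ, haΛ⟩ := lindenbaum hnpb
          exact ⟨Λ, ⟨hpΛ, fun c hc => hsubΛ (Set.mem_insert_of_mem _ hc), haΛ⟩,
            hsubΛ (Set.mem_insert b _)⟩
        · intro hb
          exact absurd (mem_of_prv_seg hp'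
            (Prv.mp (Prv.el hb) (pax (IPLAx.a9 (Form.dia a))))) hd'
      obtain ⟨z, hRz, hfz⟩ := hf ⟨(Θ', D'), hygood⟩ hsub
      have haz : a ∈ z.1.1 := (iha z).1 hfz
      exact hRz.2.2 haz
    · intro hmem y hle
      have hd : Form.dia a ∈ y.1.1 := hle hmem
      obtain ⟨Λ, hΛD, haΛ⟩ := y.2.2.2.2.1 a hd
      have hpΛ : IsPrime Λ := y.2.2.1 Λ hΛD
      exact ⟨⟨(Λ, {Set.univ}), good_single hpΛ⟩, hΛD, (iha _).2 haΛ⟩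

end CKAux

/-- Strong completeness for CK: if Γ semantically entails φ on the class of
all CK-frames, then Γ ⊢_CK φ. -/
theorem ck_strong_completeness (Γ : Set Form) (φ : Form)
    (h : ∀ F : CKFrame, ValidConseq F Γ φ) : Prv ∅ Γ φ := by
  by_contra hn
  obtain ⟨Θ, hsub, hp, hφ⟩ := CKAux.lindenbaum hn
  have hx : CKAux.Good Θ {Set.univ} := CKAux.good_single hp
  have hforces := h CKAux.canF CKAux.canV ⟨(Θ, {Set.univ}), hx⟩
    (fun ψ hψ => (CKAux.truth ψ _).2 (hsub hψ))
  exact hφ ((CKAux.truth φ _).1 hforces)
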